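/- arXiv:2403.06320 — 3 statements merged into one kernel-verified Lean document; each statement's English description precedes it below -/
import Mathlib

section
/- For every real number $a$, the function $s \mapsto \kappa(s,a) = \tanh(s\sqrt{a^2+1}) / (\sqrt{a^2+1} - a\tanh(s\sqrt{a^2+1}))$ satisfies the Riccati initial value problem: $\kappa(0,a) = 0$ and $\partial_s \kappa(s,a) = 1 + 2a\,\kappa(s,a) - \kappa(s,a)^2$ for all $s \in \mathbb{R}$. -/
open Real

noncomputable def kappa (s a : ℝ) : ℝ :=
  Real.tanh (s * Real.sqrt (a ^ 2 + 1)) /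
    (Real.sqrt (a ^ 2 + 1) - a * Real.tanh (s * Real.sqrt (a ^ 2 + 1)))

lemma hasDerivAt_tanh' (x : ℝ) : HasDerivAt Real.tanh (1 - Real.tanh x ^ 2) x := by
  have hc : Real.cosh x ≠ 0 := (Real.cosh_pos x).ne'
  have h := (Real.hasDerivAt_sinh x).div (Real.hasDerivAt_cosh x) hc
  have : HasDerivAt (fun y => Real.sinh y / Real.cosh y)
      (1 - Real.tanh x ^ 2) x := by
    refine h.congr_deriv ?_
    rw [Real.tanh_eq_sinh_div_cosh]
    have h2 := Real.cosh_sq x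
    field_simp
  exact this.congr_of_eventuallyEq (Filter.Eventually.of_forall fun y =>
    (Real.tanh_eq_sinh_div_cosh y))

lemma tanh_abs_lt_one (x : ℝ) : |Real.tanh x| < 1 := by
  rw [Real.tanh_eq_sinh_div_cosh, abs_div, abs_of_pos (Real.cosh_pos x),
    div_lt_one (Real.cosh_pos x)]
  nlinarith [Real.cosh_sq x, Real.cosh_pos x, abs_nonneg (Real.sinh x),
    sq_abs (Real.sinh x)]

/-- For every real `a`, the function `s ↦ κ(s,a)` solves the Riccati initial value problem
`κ(0,a) = 0`, `∂ₛκ(s,a) = 1 + 2a·κ(s,a) - κ(s,a)²` for all `s ∈ ℝ`. -/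
theorem kappa_riccati (a : ℝ) :
    kappa 0 a = 0 ∧
    ∀ s : ℝ, HasDerivAt (fun s' => kappa s' a)
      (1 + 2 * a * kappa s a - (kappa s a) ^ 2) s := by
  set b := Real.sqrt (a ^ 2 + 1) with hbdef
  have hb2 : b ^ 2 = a ^ 2 + 1 := Real.sq_sqrt (by positivity)
  have hbpos : 0 < b := Real.sqrt_pos.mpr (by positivity)
  have hab : |a| < b := by
    nlinarith [sq_abs a, abs_nonneg a]
  have hden : ∀ s : ℝ, b - a * Real.tanh (s * b) ≠ 0 := by
    intro s
    have h1 : |a * Real.tanh (s * b)| < b := by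
      rcases eq_or_ne a 0 with h | h
      · simpa [h] using hbpos
      · calc |a * Real.tanh (s * b)| = |a| * |Real.tanh (s * b)| := abs_mul _ _
          _ < |a| * 1 := by
            exact mul_lt_mul_of_pos_left (tanh_abs_lt_one _) (abs_pos.mpr h)
          _ ≤ b := by rw [mul_one]; exact hab.le
    have := abs_lt.mp h1
    linarith [this.1, this.2]
  constructor
  · simp [kappa, Real.tanh_zero]
  · intro s
    set t := Real.tanh (s * b) with htdef
    have ht : HasDerivAt (fun s' : ℝ => Real.tanh (s' * b)) ((1 - t ^ 2) * b) s :=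
      by have := (hasDerivAt_tanh' (s * b)).comp s (hasDerivAt_mul_const b); exact this
    have hD : HasDerivAt (fun s' : ℝ => b - a * Real.tanh (s' * b))
        (0 - a * ((1 - t ^ 2) * b)) s :=
      (hasDerivAt_const s b).sub (ht.const_mul a)
    have h := ht.div hD (hden s)
    have heq : ((1 - t ^ 2) * b * (b - a * t) - t * (0 - a * ((1 - t ^ 2) * b))) /
        (b - a * t) ^ 2 = 1 + 2 * a * kappa s a - (kappa s a) ^ 2 := by
      have hd : b - a * t ≠ 0 := hden s
      have h1 : (1 - t ^ 2) * b * (b - a * t) - t * (0 - a * ((1 - t ^ 2) * b))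
          = b ^ 2 * (1 - t ^ 2) := by ring
      simp only [kappa, ← hbdef, ← htdef]
      rw [h1, show (1 + 2 * a * (t / (b - a * t)) - (t / (b - a * t)) ^ 2)
          = ((b - a * t) ^ 2 + 2 * a * t * (b - a * t) - t ^ 2) / (b - a * t) ^ 2 from by
            field_simp,
        div_eq_div_iff (pow_ne_zero 2 hd) (pow_ne_zero 2 hd)]
      linear_combination (-(t ^ 2) * (b - a * t) ^ 2) * hb2
    rw [heq] at h
    exact h.congr_of_eventuallyEq (Filter.Eventually.of_forall fun y => by
      simp [kappa, ← hbdef])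
end

section
/- There is an absolute constant $C$ (one may take $C = 3$) such that for every real number $a$ and every $s \geq 0$, one has $\kappa(s,a) \leq C \cdot \max\{a, 1\}$, where $\kappa(s,a) = \tanh(s\sqrt{a^2+1}) / (\sqrt{a^2+1} - a\tanh(s\sqrt{a^2+1}))$. Consequently, the optimal known-$a$ control $u(t) = -\kappa(T-t,a)q(t)$ satisfies $|u(t)| \leq C\max\{a,1\}\cdot|q(t)|$ for $t \in [0,T]$. -/
open Real

/-- There is an absolute constant `C` (one may take `C = 3`) such that `κ(s,a) ≤ C·max{a,1}`
for every real `a` and every `s ≥ 0`; consequently the optimal known-`a` control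
`u(t) = -κ(T-t,a)·q(t)` satisfies `|u(t)| ≤ C·max{a,1}·|q(t)|` for `t ∈ [0,T]`. -/
theorem kappa_bound :
    ∃ C : ℝ, C = 3 ∧
      (∀ a s : ℝ, 0 ≤ s → kappa s a ≤ C * max a 1) ∧
      (∀ (a T : ℝ) (q : ℝ → ℝ) (t : ℝ), t ∈ Set.Icc 0 T →
        |(-(kappa (T - t) a)) * q t| ≤ C * max a 1 * |q t|) := by
  have key : ∀ a s : ℝ, 0 ≤ s → 0 ≤ kappa s a ∧ kappa s a ≤ 3 * max a 1 := by
    intro a s hs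
    set r := Real.sqrt (a ^ 2 + 1) with hr
    have hr2 : r ^ 2 = a ^ 2 + 1 := Real.sq_sqrt (by positivity)
    have hr1 : 1 ≤ r := by nlinarith [Real.sqrt_nonneg (a ^ 2 + 1)]
    have hra : |a| < r := by
      have : |a| ^ 2 < r ^ 2 := by rw [sq_abs]; nlinarith
      nlinarith [abs_nonneg a, Real.sqrt_nonneg (a ^ 2 + 1)]
    set t := Real.tanh (s * r) with ht
    have ht0 : 0 ≤ t := by
      rw [ht, Real.tanh_eq_sinh_div_cosh]
      exact div_nonneg (Real.sinh_nonneg_iff.mpr (by positivity)) (Real.cosh_pos _).le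
    have ht1 : t ≤ 1 := by
      rw [ht, Real.tanh_eq_sinh_div_cosh, div_le_one (Real.cosh_pos _)]
      exact le_of_lt (Real.sinh_lt_cosh _)
    have hM : max a 1 ≥ 1 := le_max_right a 1
    have hMa : a ≤ max a 1 := le_max_left a 1
    have hd : 0 < r - a * t := by
      have h1 : a * t ≤ |a| * t := mul_le_mul_of_nonneg_right (le_abs_self a) ht0
      have h2 : |a| * t ≤ |a| := by nlinarith [abs_nonneg a]
      linarith
    constructor
    · exact div_nonneg ht0 hd.le
    · rw [kappa, ← hr, ← ht, div_le_iff₀ hd]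
      rcases le_or_gt 0 a with h | h
      · have hM0 : (0:ℝ) ≤ max a 1 := le_trans zero_le_one hM
        have hra' : r ≤ a + 1 := by nlinarith [Real.sqrt_nonneg (a ^ 2 + 1)]
        have hprod : (r - a) * (r + a) = 1 := by ring_nf; nlinarith
        have hQ : 1 ≤ 3 * max a 1 * (r - a) := by nlinarith [abs_of_nonneg h]
        nlinarith [mul_nonneg (mul_nonneg hM0 h) (sub_nonneg.mpr ht1)]
      · have : -a < r := lt_of_le_of_lt (neg_le_abs a) hra
        nlinarith [mul_nonneg (le_trans zero_le_one hM) ht0]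
  refine ⟨3, rfl, fun a s hs => (key a s hs).2, fun a T q t ht => ?_⟩
  obtain ⟨h0, hκ⟩ := key a (T - t) (by linarith [ht.1, ht.2])
  rw [abs_mul, abs_neg, abs_of_nonneg h0]
  exact mul_le_mul_of_nonneg_right hκ (abs_nonneg _)
end

section
/- Let $X$ be a set (of strategies), $A$ a set (of parameter values), $E \subseteq A$ a nonempty finite subset, and $p : E \to \mathbb{R}$ with $p(a) > 0$ for all $a \in E$ and $\sum_{a \in E} p(a) = 1$. Let $C : X \to A \to \mathbb{R}$ (expected cost) and $R : X \to A \to \mathbb{R}$ (regret), and let $\sigma \in X$ satisfy: (I) for every $\sigma' \in X$, $\sum_{a \in E} p(a)\,C(\sigma)(a) \leq \sum_{a \in E} p(a)\,C(\sigma')(a)$; (II) for all $\sigma' \in X$ and $a \in A$, if $C(\sigma)(a) \leq C(\sigma')(a)$ then $R(\sigma)(a) \leq R(\sigma')(a)$; (III) $R(\sigma)(a) \leq R(\sigma)(a_0)$ for every $a \in A$ and every $a_0 \in E$. Then for every $\sigma' \in X$ and every $a \in A$ there exists $a_0 \in E$ with $R(\sigma)(a) \leq R(\sigma')(a_0)$;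 in particular $\sup_{a \in A} R(\sigma)(a) \leq \sup_{a \in A} R(\sigma')(a)$ for every $\sigma' \in X$. -/
/-- Abstract deduction of conclusion (IV) of Theorem 3 from (I), (II), (III): if `σ` is
Bayes-optimal for a prior `p` supported on a finite set `E` (I), the regret `R` is pointwise
monotone in the expected cost `C` (II), and every point of `E` maximizes `a ↦ R(σ)(a)` (III),
then for every competing strategy `σ'` and every `a` there is `a₀ ∈ E` with
`R(σ)(a) ≤ R(σ')(a₀)`; in particular `σ` minimizes the worst-case regret. -/
theorem bayes_optimal_on_maximizers_minimizes_worst_case_regret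
    {X : Type*} {A : Type*} (E : Finset A) (hE : E.Nonempty)
    (p : A → ℝ) (hp : ∀ a ∈ E, 0 < p a) (hp1 : ∑ a ∈ E, p a = 1)
    (C R : X → A → ℝ) (σ : X)
    (hI : ∀ σ' : X, ∑ a ∈ E, p a * C σ a ≤ ∑ a ∈ E, p a * C σ' a)
    (hII : ∀ (σ' : X) (a : A), C σ a ≤ C σ' a → R σ a ≤ R σ' a)
    (hIII : ∀ a : A, ∀ a₀ ∈ E, R σ a ≤ R σ a₀) :
    (∀ (σ' : X) (a : A), ∃ a₀ ∈ E, R σ a ≤ R σ' a₀) ∧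
    (∀ σ' : X, (⨆ a : A, (R σ a : EReal)) ≤ ⨆ a : A, (R σ' a : EReal)) := by
  have key : ∀ (σ' : X) (a : A), ∃ a₀ ∈ E, R σ a ≤ R σ' a₀ := by
    intro σ' a
    by_contra h
    push_neg at h
    have hlt : ∀ a₀ ∈ E, C σ' a₀ < C σ a₀ := by
      intro a₀ ha₀
      by_contra hc
      push_neg at hc
      exact absurd (le_trans (hIII a a₀ ha₀) (hII σ' a₀ hc)) (not_le.mpr (h a₀ ha₀))
    have : ∑ a ∈ E, p a * C σ' a < ∑ a ∈ E, p a * C σ a :=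
      Finset.sum_lt_sum_of_nonempty hE fun i hi =>
        mul_lt_mul_of_pos_left (hlt i hi) (hp i hi)
    exact absurd (hI σ') (not_le.mpr this)
  refine ⟨key, fun σ' => iSup_le fun a => ?_⟩
  obtain ⟨a₀, _, hle⟩ := key σ' a
  exact le_trans (EReal.coe_le_coe_iff.mpr hle) (le_iSup (fun a => (R σ' a : EReal)) a₀)
end
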